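/- Fix N ≥ 2, real numbers λ_1 > λ_2 ≥ λ_3 ≥ … ≥ λ_N and real numbers c_1, …, c_N with ∑_{k=1}^{N} c_k² = 1, c_1 ≠ 0 and c_2 ≠ 0. Define D(t) = ∑_{k=1}^{N} c_k² e^{2λ_k t}, m(t) = (∑_{j} λ_j c_j² e^{2λ_j t})/D(t), and E(t) = (∑_{j} (λ_j − m(t))² c_j² e^{2λ_j t})/D(t). Then (1/t) · log E(t) → −2(λ_1 − λ_2) as t → ∞. -/

import Mathlib

open Finset Filter

private lemma expTendsto {a : ℝ} (ha : a < 0) :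
    Tendsto (fun t : ℝ => Real.exp (a * t)) atTop (nhds 0) :=
  Real.tendsto_exp_atBot.comp (Tendsto.const_mul_atTop_of_neg ha tendsto_id)

private lemma expSplit {p q r s : ℝ} (h : p + q = r + s) :
    Real.exp p * Real.exp q = Real.exp r * Real.exp s := by
  rw [← Real.exp_add, ← Real.exp_add, h]

private lemma expSplit' {p r s : ℝ} (h : p = r + s) :
    Real.exp p = Real.exp r * Real.exp s := by
  rw [← Real.exp_add, h]

private lemma expMulTendsto (b : ℝ) {a : ℝ} (ha : a < 0) :
    Tendsto (fun t : ℝ => b * Real.exp (a * t)) atTop (nhds 0) := by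
  simpa using (expTendsto ha).const_mul b

/-- **Exponential decay rate of the energy is twice the top spectral gap.**
Let `N ≥ 2`, `lam 0 > lam 1 ≥ lam 2 ≥ … ≥ lam (N-1)`, and let `c` be weights with
`∑ c k ^ 2 = 1`, `c 0 ≠ 0`, `c 1 ≠ 0`.  With `D`, `m`, `E` as in formulas (6)–(7),
`(log E t)/t → -2 (lam 0 - lam 1)` as `t → ∞`. -/
theorem E_decay_rate (N : ℕ) (hN : 2 ≤ N)
    (lam c : Fin N → ℝ) (hc : ∑ k, (c k) ^ 2 = 1)
    (hgap : lam ⟨1, hN⟩ < lam ⟨0, by omega⟩)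
    (hord : ∀ j k : Fin N, 1 ≤ (j : ℕ) → j ≤ k → lam k ≤ lam j)
    (hc1 : c ⟨0, by omega⟩ ≠ 0) (hc2 : c ⟨1, hN⟩ ≠ 0)
    (D : ℝ → ℝ) (hD : ∀ t, D t = ∑ k, (c k) ^ 2 * Real.exp (2 * lam k * t))
    (m : ℝ → ℝ)
    (hm : ∀ t, m t = (∑ j, lam j * (c j) ^ 2 * Real.exp (2 * lam j * t)) / D t)
    (E : ℝ → ℝ)
    (hE : ∀ t, E t = (∑ j, (lam j - m t) ^ 2 * (c j) ^ 2 * Real.exp (2 * lam j * t)) / D t) :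
    Tendsto (fun t => Real.log (E t) / t) atTop
      (nhds (-2 * (lam ⟨0, by omega⟩ - lam ⟨1, hN⟩))) := by
  have hN0 : 0 < N := by omega
  set i0 : Fin N := ⟨0, hN0⟩ with hi0
  set i1 : Fin N := ⟨1, hN⟩ with hi1
  set l0 : ℝ := lam i0 with hl0
  set l1 : ℝ := lam i1 with hl1
  have hgap' : l1 < l0 := hgap
  show Tendsto (fun t => Real.log (E t) / t) atTop (nhds (-2 * (l0 - l1)))
  have hc1' : c i0 ≠ 0 := hc1
  have key : ∀ k : Fin N, k ≠ i0 → lam k ≤ l1 := by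
    intro k hk
    have hk1 : 1 ≤ (k : ℕ) := by
      rcases Nat.eq_zero_or_pos (k : ℕ) with h | h
      · exact absurd (Fin.ext h) hk
      · exact h
    exact hord i1 k le_rfl hk1
  -- u and v : rescaled D and numerator of m
  set u : ℝ → ℝ := fun t => ∑ k, (c k) ^ 2 * Real.exp (2 * (lam k - l0) * t) with hu
  set v : ℝ → ℝ := fun t => ∑ k, lam k * (c k) ^ 2 * Real.exp (2 * (lam k - l0) * t) with hv
  have hupos : ∀ t, 0 < u t := by
    intro t
    refine Finset.sum_pos' (fun k _ => by positivity) ⟨i0, Finset.mem_univ _, ?_⟩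
    positivity
  have hDu : ∀ t, D t = Real.exp (2 * l0 * t) * u t := by
    intro t
    rw [hD, hu, Finset.mul_sum]
    refine Finset.sum_congr rfl fun k _ => ?_
    rw [expSplit' (r := 2 * l0 * t) (s := 2 * (lam k - l0) * t) (by ring)]
    ring
  have hmv : ∀ t, m t = v t / u t := by
    intro t
    rw [hm, hDu]
    have : (∑ j, lam j * (c j) ^ 2 * Real.exp (2 * lam j * t))
        = Real.exp (2 * l0 * t) * v t := by
      rw [hv, Finset.mul_sum]
      refine Finset.sum_congr rfl fun k _ => ?_
      rw [expSplit' (r := 2 * l0 * t) (s := 2 * (lam k - l0) * t) (by ring)]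
      ring
    rw [this, mul_div_mul_left _ _ (Real.exp_ne_zero _)]
  have hulim : Tendsto u atTop (nhds ((c i0) ^ 2)) := by
    have : Tendsto u atTop
        (nhds (∑ k : Fin N, if k = i0 then (c i0) ^ 2 else 0)) := by
      refine tendsto_finset_sum _ fun k _ => ?_
      by_cases hk : k = i0
      · subst hk
        rw [← hl0]
        simp only [if_pos rfl, ↓reduceIte, sub_self, mul_zero, zero_mul, Real.exp_zero, mul_one]
        exact tendsto_const_nhds
      · rw [if_neg hk]
        exact expMulTendsto _ (by have := key k hk; nlinarith)
    simpa using this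
  have hvlim : Tendsto v atTop (nhds (l0 * (c i0) ^ 2)) := by
    have : Tendsto v atTop
        (nhds (∑ k : Fin N, if k = i0 then l0 * (c i0) ^ 2 else 0)) := by
      refine tendsto_finset_sum _ fun k _ => ?_
      by_cases hk : k = i0
      · subst hk
        rw [← hl0]
        simp only [if_pos rfl, ↓reduceIte, sub_self, mul_zero, zero_mul, Real.exp_zero, mul_one]
        exact tendsto_const_nhds
      · rw [if_neg hk]
        exact expMulTendsto _ (by have := key k hk; nlinarith)
    simpa using this
  have hc0sq : (c i0) ^ 2 ≠ 0 := pow_ne_zero _ hc1'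
  have hmlim : Tendsto m atTop (nhds l0) := by
    have := hvlim.div hulim hc0sq
    have heq : l0 * (c i0) ^ 2 / (c i0) ^ 2 = l0 := by field_simp
    rw [heq] at this
    exact this.congr fun t => (hmv t).symm
  -- the i0-term decays: (l0 - m t) * exp ((l0 - l1) t) → 0
  set w : ℝ → ℝ := fun t =>
    ∑ j, (l0 - lam j) * (c j) ^ 2 * Real.exp ((2 * (lam j - l0) + (l0 - l1)) * t) with hw
  have hwlim : Tendsto w atTop (nhds 0) := by
    have : Tendsto w atTop (nhds (∑ _j : Fin N, (0:ℝ))) := by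
      refine tendsto_finset_sum _ fun k _ => ?_
      by_cases hk : k = i0
      · subst hk
        rw [← hl0]
        simp only [sub_self, zero_mul]
        exact tendsto_const_nhds
      · exact expMulTendsto _ (by have := key k hk; nlinarith)
    simpa using this
  have hkey0 : Tendsto (fun t => (l0 - m t) * Real.exp ((l0 - l1) * t)) atTop (nhds 0) := by
    have heq : ∀ t, (l0 - m t) * Real.exp ((l0 - l1) * t) = w t / u t := by
      intro t
      have hut := (hupos t).ne'
      have h1 : l0 - m t = (l0 * u t - v t) / u t := by
        rw [hmv]; field_simp
      have h2 : (l0 * u t - v t) * Real.exp ((l0 - l1) * t) = w t := by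
        simp only [hu, hv, hw]
        rw [Finset.mul_sum, ← Finset.sum_sub_distrib, Finset.sum_mul]
        refine Finset.sum_congr rfl fun k _ => ?_
        rw [expSplit' (p := (2 * (lam k - l0) + (l0 - l1)) * t)
          (r := 2 * (lam k - l0) * t) (s := (l0 - l1) * t) (by ring)]
        ring
      rw [h1, div_mul_eq_mul_div, h2]
    have := hwlim.div hulim hc0sq
    rw [zero_div] at this
    exact this.congr fun t => (heq t).symm
  -- g := E · exp(2Δ·) and its limit
  set g : ℝ → ℝ := fun t => E t * Real.exp (2 * (l0 - l1) * t) with hg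
  have hgform : ∀ t, g t
      = (∑ j, (lam j - m t) ^ 2 * (c j) ^ 2 * Real.exp (2 * (lam j - l1) * t)) / u t := by
    intro t
    show E t * Real.exp (2 * (l0 - l1) * t) = _
    have hut := (hupos t).ne'
    have hnum : (∑ j, (lam j - m t) ^ 2 * (c j) ^ 2 * Real.exp (2 * lam j * t))
        * Real.exp (2 * (l0 - l1) * t)
        = Real.exp (2 * l0 * t)
          * ∑ j, (lam j - m t) ^ 2 * (c j) ^ 2 * Real.exp (2 * (lam j - l1) * t) := by
      rw [Finset.sum_mul, Finset.mul_sum]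
      refine Finset.sum_congr rfl fun k _ => ?_
      have he : Real.exp (2 * lam k * t) * Real.exp (2 * (l0 - l1) * t)
          = Real.exp (2 * l0 * t) * Real.exp (2 * (lam k - l1) * t) :=
        expSplit (by ring)
      calc (lam k - m t) ^ 2 * (c k) ^ 2 * Real.exp (2 * lam k * t)
            * Real.exp (2 * (l0 - l1) * t)
          = (lam k - m t) ^ 2 * (c k) ^ 2
            * (Real.exp (2 * lam k * t) * Real.exp (2 * (l0 - l1) * t)) := by ring
        _ = (lam k - m t) ^ 2 * (c k) ^ 2
            * (Real.exp (2 * l0 * t) * Real.exp (2 * (lam k - l1) * t)) := by rw [he]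
        _ = Real.exp (2 * l0 * t)
            * ((lam k - m t) ^ 2 * (c k) ^ 2 * Real.exp (2 * (lam k - l1) * t)) := by ring
    rw [hE, hDu, div_mul_eq_mul_div, hnum, mul_comm (Real.exp (2 * l0 * t)),
      mul_div_assoc, div_mul_eq_div_div, div_self (Real.exp_ne_zero _), mul_one_div]
  set L : Fin N → ℝ := fun j => if j ≠ i0 ∧ lam j = l1 then (lam j - l0) ^ 2 * (c j) ^ 2 else 0
    with hL
  have hSpos : 0 < ∑ j, L j := by
    have h1 : L i1 = (l1 - l0) ^ 2 * (c i1) ^ 2 := by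
      rw [hL]
      have : i1 ≠ i0 := by simp [hi0, hi1, Fin.ext_iff]
      simp [this, ← hl1]
    have h1pos : 0 < L i1 := by
      rw [h1]
      have : l1 - l0 ≠ 0 := by linarith
      positivity
    have hnn : ∀ j ∈ Finset.univ, (0:ℝ) ≤ L j := by
      intro j _
      rw [hL]
      dsimp only
      split <;> positivity
    calc (0:ℝ) < L i1 := h1pos
    _ ≤ ∑ j, L j := Finset.single_le_sum hnn (Finset.mem_univ _)
  have hglim : Tendsto g atTop (nhds ((∑ j, L j) / (c i0) ^ 2)) := by
    have hnum : Tendsto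
        (fun t => ∑ j, (lam j - m t) ^ 2 * (c j) ^ 2 * Real.exp (2 * (lam j - l1) * t))
        atTop (nhds (∑ j, L j)) := by
      refine tendsto_finset_sum _ fun k _ => ?_
      by_cases hk : k = i0
      · subst hk
        have hL0 : L i0 = 0 := by rw [hL]; simp
        rw [hL0]
        have heq : ∀ t, (lam i0 - m t) ^ 2 * (c i0) ^ 2 * Real.exp (2 * (lam i0 - l1) * t)
            = (c i0) ^ 2 * ((l0 - m t) * Real.exp ((l0 - l1) * t)) ^ 2 := by
          intro t
          rw [mul_pow, ← Real.exp_nat_mul]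
          push_cast
          rw [← hl0]
          ring_nf
        have : Tendsto (fun t => (c i0) ^ 2 * ((l0 - m t) * Real.exp ((l0 - l1) * t)) ^ 2)
            atTop (nhds ((c i0) ^ 2 * 0 ^ 2)) :=
          tendsto_const_nhds.mul (hkey0.pow 2)
        simp only [ne_eq, OfNat.ofNat_ne_zero, not_false_eq_true, zero_pow, mul_zero] at this
        exact this.congr fun t => (heq t).symm
      · by_cases hlk : lam k = l1
        · have hLk : L k = (lam k - l0) ^ 2 * (c k) ^ 2 := by rw [hL]; simp [hk, hlk]
          rw [hLk]
          have heq : ∀ t, (lam k - m t) ^ 2 * (c k) ^ 2 * Real.exp (2 * (lam k - l1) * t)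
              = (lam k - m t) ^ 2 * (c k) ^ 2 := by
            intro t
            rw [hlk, sub_self, mul_zero, zero_mul, Real.exp_zero, mul_one]
          have : Tendsto (fun t => (lam k - m t) ^ 2 * (c k) ^ 2) atTop
              (nhds ((lam k - l0) ^ 2 * (c k) ^ 2)) :=
            ((tendsto_const_nhds.sub hmlim).pow 2).mul tendsto_const_nhds
          exact this.congr fun t => (heq t).symm
        · have hLk : L k = 0 := by rw [hL]; simp [hlk]
          rw [hLk]
          have hlt : lam k < l1 := lt_of_le_of_ne (key k hk) hlk
          have hexp : Tendsto (fun t => Real.exp (2 * (lam k - l1) * t)) atTop (nhds 0) :=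
            expTendsto (by nlinarith)
          have : Tendsto
              (fun t => (lam k - m t) ^ 2 * (c k) ^ 2 * Real.exp (2 * (lam k - l1) * t))
              atTop (nhds ((lam k - l0) ^ 2 * (c k) ^ 2 * 0)) :=
            (((tendsto_const_nhds.sub hmlim).pow 2).mul tendsto_const_nhds).mul hexp
          simpa using this
    have := hnum.div hulim hc0sq
    exact this.congr fun t => (hgform t).symm
  -- conclude
  set S : ℝ := (∑ j, L j) / (c i0) ^ 2 with hS
  have hSpos' : 0 < S := by
    rw [hS]
    exact div_pos hSpos (lt_of_le_of_ne (sq_nonneg _) (Ne.symm hc0sq))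
  have hgpos : ∀ᶠ t in atTop, 0 < g t := hglim.eventually (eventually_gt_nhds hSpos')
  have hloglim : Tendsto (fun t => Real.log (g t)) atTop (nhds (Real.log S)) :=
    (Real.continuousAt_log hSpos'.ne').tendsto.comp hglim
  have hfinal : Tendsto (fun t => Real.log (g t) / t + (-2 * (l0 - l1))) atTop
      (nhds (0 + -2 * (l0 - l1))) :=
    (hloglim.div_atTop tendsto_id).add tendsto_const_nhds
  rw [zero_add] at hfinal
  refine hfinal.congr' ?_
  filter_upwards [hgpos, eventually_gt_atTop (0:ℝ)] with t hgt ht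
  have hEt : E t = g t / Real.exp (2 * (l0 - l1) * t) := by
    rw [hg, mul_div_assoc, div_self (Real.exp_ne_zero _), mul_one]
  rw [hEt, Real.log_div hgt.ne' (Real.exp_ne_zero _), Real.log_exp, sub_div]
  have h2 : 2 * (l0 - l1) * t / t = 2 * (l0 - l1) := by
    field_simp
  rw [h2]
  ring
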